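/- Drift-plus-penalty expectation bounds (Theorem 1): Suppose E[L(Q(0))] < ∞ and for all t and all histories H(t), Δ(H(t)) + V·E[p(t)|H(t)] ≤ B + V·p* − ε·∑_{k=1}^K |Q_k(t)|, where Δ(H(t)) = E[L(Q(t+1)) − L(Q(t)) | H(t)], with finite constants B, p*, V > 0, ε > 0. If there is a finite constant p_min with E[p(t)] ≥ p_min for all t, then: (i) limsup_{M→∞} (1/M) ∑_{t=0}^{M−1} E[p(t)] ≤ p* + B/V, and (ii) limsup_{M→∞} (1/M) ∑_{t=0}^{M−1} ∑_k E[|Q_k(t)|] ≤ (B + V(p* − p_min))/ε. Moreover, for all M ≥ 1 the non-asymptotic bounds (1/M)∑_{t<M} E[p(t)] ≤ p* + B/V + E[L(Q(0))]/(VM) and (1/M)∑_{t<M}∑_k E[|Q_k(t)|] ≤ (B + V(p* − p_min))/ε + E[L(Q(0))]/(εM) hold. -/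

import Mathlib

open MeasureTheory ProbabilityTheory Filter Topology

/-- The quadratic Lyapunov function `L(q) = (1/2) ∑ₖ wₖ qₖ²`. -/
noncomputable def lyap {K : ℕ} (w : Fin K → ℝ) (q : Fin K → ℝ) : ℝ :=
  (1 / 2) * ∑ k, w k * q k ^ 2

/-- The history σ-algebra `H(t)` generated by `Q(0), ..., Q(t)` and `p(0), ..., p(t-1)`. -/
def hist {Ω : Type*} [MeasurableSpace Ω] {K : ℕ}
    (Q : ℕ → Ω → Fin K → ℝ) (p : ℕ → Ω → ℝ) (t : ℕ) : MeasurableSpace Ω :=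
  (⨆ i ∈ Finset.range (t + 1), MeasurableSpace.comap (Q i) inferInstance) ⊔
    (⨆ i ∈ Finset.range t, MeasurableSpace.comap (p i) inferInstance)

/-- Drift-plus-penalty expectation bounds: if `E[L(Q(0))] < ∞`, the
drift-plus-penalty condition `Δ(H(t)) + V E[p(t)|H(t)] ≤ B + V p* - ε ∑ₖ |Qₖ(t)|` holds
for all `t` with `V > 0`, `ε > 0`, and `E[p(t)] ≥ p_min`, then the time-average expected
penalty is at most `p* + B/V` and the time-average expected total backlog is at most
`(B + V(p* - p_min))/ε` in the limsup, with the corresponding non-asymptotic bounds. -/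
theorem drift_plus_penalty_expectation_bounds
    {Ω : Type*} [MeasureSpace Ω] [IsProbabilityMeasure (ℙ : Measure Ω)]
    {K : ℕ} (w : Fin K → ℝ) (hw : ∀ k, 0 < w k)
    (Q : ℕ → Ω → Fin K → ℝ) (p : ℕ → Ω → ℝ)
    (hQm : ∀ t, Measurable (Q t)) (hpm : ∀ t, Measurable (p t))
    (hLint : ∀ t, Integrable (fun ω => lyap w (Q t ω)) ℙ)
    (hpint : ∀ t, Integrable (p t) ℙ)
    (B pstar V ε : ℝ) (hV : 0 < V) (hε : 0 < ε)
    (hdrift : ∀ t, ∀ᵐ ω ∂(ℙ : Measure Ω),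
      ((ℙ : Measure Ω)[fun ω' => lyap w (Q (t + 1) ω') - lyap w (Q t ω') | hist Q p t]) ω
          + V * ((ℙ : Measure Ω)[p t | hist Q p t]) ω
        ≤ B + V * pstar - ε * ∑ k, |Q t ω k|)
    (pmin : ℝ) (hpmin : ∀ t, pmin ≤ ∫ ω, p t ω ∂(ℙ : Measure Ω)) :
    (Filter.limsup (fun M : ℕ =>
        (1 / (M : ℝ)) * ∑ t ∈ Finset.range M, ∫ ω, p t ω ∂(ℙ : Measure Ω)) atTop
      ≤ pstar + B / V) ∧
    (Filter.limsup (fun M : ℕ =>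
        (1 / (M : ℝ)) * ∑ t ∈ Finset.range M, ∑ k, ∫ ω, |Q t ω k| ∂(ℙ : Measure Ω)) atTop
      ≤ (B + V * (pstar - pmin)) / ε) ∧
    (∀ M : ℕ, 0 < M →
      (1 / (M : ℝ)) * ∑ t ∈ Finset.range M, ∫ ω, p t ω ∂(ℙ : Measure Ω)
        ≤ pstar + B / V + (∫ ω, lyap w (Q 0 ω) ∂(ℙ : Measure Ω)) / (V * M)) ∧
    (∀ M : ℕ, 0 < M →
      (1 / (M : ℝ)) * ∑ t ∈ Finset.range M, ∑ k, ∫ ω, |Q t ω k| ∂(ℙ : Measure Ω)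
        ≤ (B + V * (pstar - pmin)) / ε + (∫ ω, lyap w (Q 0 ω) ∂(ℙ : Measure Ω)) / (ε * M)) := by
  classical
  -- abbreviations
  set a : ℕ → ℝ := fun t => ∫ ω, lyap w (Q t ω) ∂(ℙ : Measure Ω) with ha
  set P : ℕ → ℝ := fun t => ∫ ω, p t ω ∂(ℙ : Measure Ω) with hP
  set S : ℕ → ℝ := fun t => ∑ k, ∫ ω, |Q t ω k| ∂(ℙ : Measure Ω) with hS
  -- nonnegativity of the Lyapunov function
  have hLnn : ∀ t ω, 0 ≤ lyap w (Q t ω) := by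
    intro t ω
    have : 0 ≤ ∑ k, w k * Q t ω k ^ 2 :=
      Finset.sum_nonneg fun k _ => mul_nonneg (hw k).le (sq_nonneg _)
    simp only [lyap]; linarith
  have hann : ∀ t, 0 ≤ a t := fun t => integral_nonneg (hLnn t)
  -- measurability of coordinates
  have hQkm : ∀ t k, Measurable fun ω => Q t ω k := fun t k =>
    (measurable_pi_apply k).comp (hQm t)
  -- integrability of |Q t ω k|
  have hQabs : ∀ t k, Integrable (fun ω => |Q t ω k|) ℙ := by
    intro t k
    have hsum : Integrable (fun ω => ∑ j, w j * Q t ω j ^ 2) ℙ := by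
      have h2 := (hLint t).const_mul 2
      refine h2.congr (Filter.Eventually.of_forall fun ω => ?_)
      simp only [lyap]; ring
    have hsq : Integrable (fun ω => w k * Q t ω k ^ 2) ℙ := by
      refine hsum.mono' (((hQkm t k).pow_const 2).const_mul (w k)).aestronglyMeasurable ?_
      filter_upwards with ω
      rw [Real.norm_eq_abs, abs_of_nonneg (mul_nonneg (hw k).le (sq_nonneg _))]
      exact Finset.single_le_sum (fun j _ => mul_nonneg (hw j).le (sq_nonneg _))
        (Finset.mem_univ k)
    have hsq' : Integrable (fun ω => Q t ω k ^ 2) ℙ := by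
      have h3 := hsq.const_mul (w k)⁻¹
      refine h3.congr (Filter.Eventually.of_forall fun ω => ?_)
      exact inv_mul_cancel_left₀ (hw k).ne' _
    refine ((integrable_const (1 : ℝ)).add hsq').mono'
      (hQkm t k).abs.aestronglyMeasurable ?_
    filter_upwards with ω
    simp only [Pi.add_apply, Real.norm_eq_abs, abs_abs]
    nlinarith [sq_nonneg (|Q t ω k| - 1), sq_abs (Q t ω k)]
  have hSnn : ∀ t, 0 ≤ S t := by
    intro t
    exact Finset.sum_nonneg fun k _ => integral_nonneg fun ω => abs_nonneg _
  -- the history σ-algebra is a sub-σ-algebra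
  have hm : ∀ t, hist Q p t ≤ (inferInstance : MeasurableSpace Ω) := by
    intro t
    refine sup_le (iSup₂_le fun i _ => ?_) (iSup₂_le fun i _ => ?_)
    · exact (hQm i).comap_le
    · exact (hpm i).comap_le
  -- per-step expectation inequality
  have key : ∀ t, a (t + 1) - a t + V * P t + ε * S t ≤ B + V * pstar := by
    intro t
    have hmt := hm t
    have hLHSint : Integrable (fun ω =>
        ((ℙ : Measure Ω)[fun ω' => lyap w (Q (t + 1) ω') - lyap w (Q t ω') | hist Q p t]) ω
          + V * ((ℙ : Measure Ω)[p t | hist Q p t]) ω) ℙ :=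
      integrable_condExp.add (integrable_condExp.const_mul V)
    have hRHSint : Integrable (fun ω => B + V * pstar - ε * ∑ k, |Q t ω k|) ℙ :=
      (integrable_const _).sub ((integrable_finset_sum _ fun k _ => hQabs t k).const_mul ε)
    have hmono := integral_mono_ae hLHSint hRHSint (hdrift t)
    have hdiff : Integrable (fun ω => lyap w (Q (t + 1) ω) - lyap w (Q t ω)) ℙ :=
      (hLint _).sub (hLint _)
    rw [integral_add integrable_condExp (integrable_condExp.const_mul V),
      integral_const_mul, integral_condExp hmt, integral_condExp hmt,
      integral_sub (hLint _) (hLint _)] at hmono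
    rw [integral_sub (integrable_const _)
        ((integrable_finset_sum _ fun k _ => hQabs t k).const_mul ε),
      integral_const, integral_const_mul,
      integral_finset_sum _ fun k _ => hQabs t k] at hmono
    simp only [measure_univ, probReal_univ, ENNReal.toReal_one, smul_eq_mul, one_mul] at hmono
    simp only [ha, hP, hS]
    linarith
  -- telescoped inequality
  have tele : ∀ M : ℕ,
      a M - a 0 + V * ∑ t ∈ Finset.range M, P t + ε * ∑ t ∈ Finset.range M, S t
        ≤ M * (B + V * pstar) := by
    intro M
    have h := Finset.sum_le_sum (fun t (_ : t ∈ Finset.range M) => key t)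
    have h1 : ∑ t ∈ Finset.range M, (a (t + 1) - a t + V * P t + ε * S t)
        = (a M - a 0) + V * ∑ t ∈ Finset.range M, P t
          + ε * ∑ t ∈ Finset.range M, S t := by
      simp only [Finset.sum_add_distrib, Finset.sum_range_sub, Finset.mul_sum]
    rw [h1] at h
    simpa [Finset.sum_const, Finset.card_range, nsmul_eq_mul, mul_add] using h
  -- non-asymptotic penalty bound
  have bound1 : ∀ M : ℕ, 0 < M →
      (1 / (M : ℝ)) * ∑ t ∈ Finset.range M, P t ≤ pstar + B / V + a 0 / (V * M) := by
    intro M hM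
    have hM' : (0 : ℝ) < M := Nat.cast_pos.mpr hM
    have h := tele M
    have hSsum : 0 ≤ ∑ t ∈ Finset.range M, S t :=
      Finset.sum_nonneg fun t _ => hSnn t
    have haM := hann M
    rw [one_div, inv_mul_le_iff₀ hM']
    have e1 : B / V * V = B := div_mul_cancel₀ _ hV.ne'
    have e2 : a 0 / (V * M) * (V * M) = a 0 :=
      div_mul_cancel₀ _ (by positivity)
    nlinarith [mul_pos hV hM']
  -- non-asymptotic backlog bound
  have bound2 : ∀ M : ℕ, 0 < M →
      (1 / (M : ℝ)) * ∑ t ∈ Finset.range M, S t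
        ≤ (B + V * (pstar - pmin)) / ε + a 0 / (ε * M) := by
    intro M hM
    have hM' : (0 : ℝ) < M := Nat.cast_pos.mpr hM
    have h := tele M
    have hPsum : (M : ℝ) * pmin ≤ ∑ t ∈ Finset.range M, P t := by
      calc (M : ℝ) * pmin = ∑ _t ∈ Finset.range M, pmin := by
            simp [Finset.sum_const, Finset.card_range, mul_comm]
        _ ≤ ∑ t ∈ Finset.range M, P t :=
            Finset.sum_le_sum fun t _ => hpmin t
    have haM := hann M
    rw [one_div, inv_mul_le_iff₀ hM']
    have e1 : (B + V * (pstar - pmin)) / ε * ε = B + V * (pstar - pmin) :=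
      div_mul_cancel₀ _ hε.ne'
    have e2 : a 0 / (ε * M) * (ε * M) = a 0 :=
      div_mul_cancel₀ _ (by positivity)
    nlinarith [mul_pos hε hM']
  refine ⟨?_, ?_, bound1, bound2⟩
  · -- limsup penalty bound
    have hev : ∀ᶠ M : ℕ in atTop,
        (1 / (M : ℝ)) * ∑ t ∈ Finset.range M, P t
          ≤ pstar + B / V + a 0 / (V * M) := by
      filter_upwards [eventually_gt_atTop 0] with M hM using bound1 M hM
    have htend : Tendsto (fun M : ℕ => pstar + B / V + a 0 / (V * M)) atTop
        (𝓝 (pstar + B / V)) := by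
      have : Tendsto (fun M : ℕ => a 0 / (V * M)) atTop (𝓝 0) := by
        have h1 : Tendsto (fun M : ℕ => (V * M : ℝ)) atTop atTop :=
          (tendsto_natCast_atTop_atTop).const_mul_atTop hV
        exact tendsto_const_nhds.div_atTop h1
      simpa using (tendsto_const_nhds.add this)
    have hlow : ∀ᶠ M : ℕ in atTop,
        min pmin 0 ≤ (1 / (M : ℝ)) * ∑ t ∈ Finset.range M, P t := by
      filter_upwards [eventually_gt_atTop 0] with M hM
      have hM' : (0 : ℝ) < M := Nat.cast_pos.mpr hM
      have hPsum : (M : ℝ) * pmin ≤ ∑ t ∈ Finset.range M, P t := by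
        calc (M : ℝ) * pmin = ∑ _t ∈ Finset.range M, pmin := by
              simp [Finset.sum_const, Finset.card_range, mul_comm]
          _ ≤ ∑ t ∈ Finset.range M, P t := Finset.sum_le_sum fun t _ => hpmin t
      have : pmin ≤ (1 / (M : ℝ)) * ∑ t ∈ Finset.range M, P t := by
        rw [one_div, le_inv_mul_iff₀ hM']
        linarith
      exact le_trans (min_le_left _ _) this
    calc limsup (fun M : ℕ => (1 / (M : ℝ)) * ∑ t ∈ Finset.range M, P t) atTop
        ≤ limsup (fun M : ℕ => pstar + B / V + a 0 / (V * M)) atTop :=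
          limsup_le_limsup hev (isCoboundedUnder_le_of_eventually_le _ hlow)
            htend.isBoundedUnder_le
      _ = pstar + B / V := htend.limsup_eq
  · -- limsup backlog bound
    have hev : ∀ᶠ M : ℕ in atTop,
        (1 / (M : ℝ)) * ∑ t ∈ Finset.range M, S t
          ≤ (B + V * (pstar - pmin)) / ε + a 0 / (ε * M) := by
      filter_upwards [eventually_gt_atTop 0] with M hM using bound2 M hM
    have htend : Tendsto (fun M : ℕ => (B + V * (pstar - pmin)) / ε + a 0 / (ε * M)) atTop
        (𝓝 ((B + V * (pstar - pmin)) / ε)) := by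
      have : Tendsto (fun M : ℕ => a 0 / (ε * M)) atTop (𝓝 0) := by
        have h1 : Tendsto (fun M : ℕ => (ε * M : ℝ)) atTop atTop :=
          (tendsto_natCast_atTop_atTop).const_mul_atTop hε
        exact tendsto_const_nhds.div_atTop h1
      simpa using (tendsto_const_nhds.add this)
    have hlow : ∀ᶠ M : ℕ in atTop,
        (0 : ℝ) ≤ (1 / (M : ℝ)) * ∑ t ∈ Finset.range M, S t := by
      filter_upwards with M
      have : 0 ≤ ∑ t ∈ Finset.range M, S t := Finset.sum_nonneg fun t _ => hSnn t
      positivity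
    calc limsup (fun M : ℕ => (1 / (M : ℝ)) * ∑ t ∈ Finset.range M, S t) atTop
        ≤ limsup (fun M : ℕ => (B + V * (pstar - pmin)) / ε + a 0 / (ε * M)) atTop :=
          limsup_le_limsup hev (isCoboundedUnder_le_of_eventually_le _ hlow)
            htend.isBoundedUnder_le
      _ = (B + V * (pstar - pmin)) / ε := htend.limsup_eq
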